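/- Let M be a symmetric subset of a normed space X with 0 ∉ M, and let σ : [0,1] → M be a continuous path with σ(1) = −σ(0). Then the set A = σ([0,1]) ∪ (−σ([0,1])) is a compact, symmetric subset of M not containing 0, A is connected, and its Krasnoselskii genus satisfies γ(A) ≥ 2. -/
import Mathlib


/-- If `M` is symmetric with `0 ∉ M` and `σ : [0,1] → M` is a continuous path
with `σ(1) = -σ(0)`, then `A = σ([0,1]) ∪ (-σ([0,1]))` is compact, symmetric,
contained in `M`, does not contain `0`, is connected, and has Krasnoselskii
genus `≥ 2` (i.e. there is no continuous odd map `A → ℝ \ {0}`). -/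
theorem stmt16 (X : Type*) [NormedAddCommGroup X] [NormedSpace ℝ X]
    (M : Set X) (hsym : ∀ x ∈ M, -x ∈ M) (h0 : (0:X) ∉ M)
    (σ : ℝ → X) (hσ : ContinuousOn σ (Set.Icc 0 1))
    (hmem : Set.MapsTo σ (Set.Icc 0 1) M) (hend : σ 1 = -σ 0) :
    ∀ A : Set X, A = σ '' Set.Icc 0 1 ∪ -(σ '' Set.Icc 0 1) →
      IsCompact A ∧ A ⊆ M ∧ (∀ x ∈ A, -x ∈ A) ∧ (0:X) ∉ A ∧ IsConnected A ∧
      ¬ ∃ g : X → ℝ, ContinuousOn g A ∧ (∀ x ∈ A, g (-x) = -g x) ∧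
        (∀ x ∈ A, g x ≠ 0) := by
  intro A hA
  have hIcc : IsCompact (Set.Icc (0:ℝ) 1) := isCompact_Icc
  have hS : IsCompact (σ '' Set.Icc 0 1) := hIcc.image_of_continuousOn hσ
  have hSneg : IsCompact (-(σ '' Set.Icc 0 1)) := hS.neg
  have h01 : (0:ℝ) ∈ Set.Icc (0:ℝ) 1 := by norm_num
  have h11 : (1:ℝ) ∈ Set.Icc (0:ℝ) 1 := by norm_num
  have hSM : σ '' Set.Icc 0 1 ⊆ M := Set.image_subset_iff.mpr hmem
  have hAM : A ⊆ M := by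
    rw [hA]
    rintro x (hx | hx)
    · exact hSM hx
    · rw [Set.mem_neg] at hx
      simpa using hsym _ (hSM hx)
  refine ⟨?_, hAM, ?_, fun h => h0 (hAM h), ?_, ?_⟩
  · rw [hA]; exact hS.union hSneg
  · rw [hA]
    rintro x (hx | hx)
    · right; simpa using hx
    · left; rw [Set.mem_neg] at hx; simpa using hx
  · -- connected
    have hc : IsConnected (σ '' Set.Icc 0 1) :=
      (isConnected_Icc zero_le_one).image σ hσ
    have hcn : IsConnected (-(σ '' Set.Icc 0 1)) := by
      have himg : -(σ '' Set.Icc 0 1) = (fun x => -x) '' (σ '' Set.Icc 0 1) := by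
        ext x; simp [Set.mem_neg, eq_comm, neg_eq_iff_eq_neg]
      rw [himg]
      exact hc.image (fun x => -x) continuous_neg.continuousOn
    rw [hA]
    apply hc.union ?_ hcn
    refine ⟨σ 1, ⟨Set.mem_image_of_mem σ h11, ?_⟩⟩
    rw [Set.mem_neg, hend, neg_neg]
    exact Set.mem_image_of_mem σ h01
  · rintro ⟨g, hg, hodd, hne⟩
    have hσ0A : σ 0 ∈ A := by rw [hA]; exact Or.inl (Set.mem_image_of_mem σ h01)
    have hσ1A : σ 1 ∈ A := by rw [hA]; exact Or.inl (Set.mem_image_of_mem σ h11)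
    have hSA : σ '' Set.Icc 0 1 ⊆ A := by rw [hA]; exact Set.subset_union_left
    have hf : ContinuousOn (g ∘ σ) (Set.Icc 0 1) :=
      hg.comp hσ (fun t ht => hSA (Set.mem_image_of_mem σ ht))
    have h1 : g (σ 1) = - g (σ 0) := by rw [hend, hodd _ hσ0A]
    have h0mem : (0:ℝ) ∈ Set.uIcc ((g ∘ σ) 0) ((g ∘ σ) 1) := by
      simp only [Function.comp, h1, Set.mem_uIcc]
      rcases le_total (g (σ 0)) 0 with h | h
      · left; constructor <;> linarith
      · right; constructor <;> linarith
    have := intermediate_value_uIcc (f := g ∘ σ) (a := 0) (b := 1)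
      (by rw [Set.uIcc_of_le (zero_le_one)]; exact hf) h0mem
    obtain ⟨t, ht, ht0⟩ := this
    rw [Set.uIcc_of_le zero_le_one] at ht
    exact hne _ (hSA (Set.mem_image_of_mem σ ht)) ht0
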